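/- Let G = (V, E) be a finite simple graph with minimum vertex cover size τ and minimum fractional vertex cover size σ. Let c ≥ 1 and let δ, γ be reals with 0 < δ ≤ γ/4 and γ ≤ 1/8; set λ = √(γδ). Let x be a fractional vertex cover of G of size at most (1+δ)·σ. Then there exists a real α with 1/2 − γ − λ ≤ α ≤ 1/2 − λ such that, writing L = {v ∈ V : x(v) < α}, H = {v ∈ V : x(v) > 1−α}, and K = V ∖ (L ∪ H): (a) |K| ≤ (2 + 35γ)·τ; and (b) for every set S_K ⊆ K that is a vertex cover of the induced subgraph G[K] with |S_K| ≤ c·τ(G[K]), the set S_K ∪ H is a vertex cover of G of cardinality at most c·(1 + 17·√(δ/γ))·τ. -/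

import Mathlib

/-- A fractional vertex cover of a simple graph. -/
def IsFracVC {V : Type*} (G : SimpleGraph V) (x : V → ℝ) : Prop :=
  (∀ v, 0 ≤ x v ∧ x v ≤ 1) ∧ ∀ ⦃u v : V⦄, G.Adj u v → 1 ≤ x u + x v

/-- A vertex cover of a simple graph. -/
def IsVC {V : Type*} (G : SimpleGraph V) (S : Set V) : Prop :=
  ∀ ⦃u v : V⦄, G.Adj u v → u ∈ S ∨ v ∈ S

/-- The minimum cardinality of a vertex cover of `G`. -/
noncomputable def tau {V : Type*} (G : SimpleGraph V) : ℕ :=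
  sInf {m | ∃ S : Set V, IsVC G S ∧ S.ncard = m}

/-- A vertex cover of the subgraph induced by `K`: a subset of `K` covering all edges
with both endpoints in `K`. -/
def IsVCOn {V : Type*} (G : SimpleGraph V) (K S : Set V) : Prop :=
  S ⊆ K ∧ ∀ ⦃u v : V⦄, G.Adj u v → u ∈ K → v ∈ K → u ∈ S ∨ v ∈ S

/-- The minimum cardinality of a vertex cover of the subgraph of `G` induced by `K`. -/
noncomputable def tauOn {V : Type*} (G : SimpleGraph V) (K : Set V) : ℕ :=
  sInf {m | ∃ S : Set V, IsVCOn G K S ∧ S.ncard = m}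

/-- The minimum size of a fractional vertex cover of `G`. -/
noncomputable def fracTau {V : Type*} [Fintype V] (G : SimpleGraph V) : ℝ :=
  sInf {s : ℝ | ∃ x : V → ℝ, IsFracVC G x ∧ (∑ v, x v) = s}

open Finset in
set_option maxHeartbeats 4000000 in
/-- explicit-constant Nemhauser–Trotter kernel from an approximately optimal
fractional vertex cover. -/
theorem stmt_7 {V : Type*} [Fintype V] (G : SimpleGraph V)
    (c δ γ : ℝ) (hc : 1 ≤ c) (hδ0 : 0 < δ) (hδγ : δ ≤ γ / 4) (hγ : γ ≤ 1 / 8)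
    (x : V → ℝ) (hx : IsFracVC G x)
    (hxsize : (∑ v, x v) ≤ (1 + δ) * fracTau G) :
    ∃ α : ℝ, 1 / 2 - γ - Real.sqrt (γ * δ) ≤ α ∧ α ≤ 1 / 2 - Real.sqrt (γ * δ) ∧
      ∀ L H K : Set V, L = {v | x v < α} → H = {v | 1 - α < x v} →
        K = Set.univ \ (L ∪ H) →
        ((K.ncard : ℝ) ≤ (2 + 35 * γ) * (tau G : ℝ)) ∧
        (∀ SK : Set V, IsVCOn G K SK → (SK.ncard : ℝ) ≤ c * (tauOn G K : ℝ) →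
          IsVC G (SK ∪ H) ∧
            ((SK ∪ H).ncard : ℝ) ≤ c * (1 + 17 * Real.sqrt (δ / γ)) * (tau G : ℝ)) := by
  classical
  have hγ0 : (0:ℝ) < γ := by linarith
  have hδ32 : δ ≤ 1/32 := by linarith
  set l := Real.sqrt (γ * δ) with hldef
  have hl2 : l ^ 2 = γ * δ := Real.sq_sqrt (by positivity)
  have hll : l * l = γ * δ := by rw [← hl2]; ring
  have hl0 : 0 < l := Real.sqrt_pos.2 (by positivity)
  have hl2γ : 2 * l ≤ γ := by nlinarith
  set N := ⌊γ / l⌋₊ with hNdef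
  have hN2 : 2 ≤ N := Nat.le_floor (by rw [Nat.cast_ofNat, le_div_iff₀ hl0]; linarith)
  have hNl : (N:ℝ) * l ≤ γ := by
    have h := Nat.floor_le (le_of_lt (div_pos hγ0 hl0))
    calc (N:ℝ) * l ≤ (γ/l) * l := mul_le_mul_of_nonneg_right h hl0.le
      _ = γ := by field_simp
  have hγ2Nl : γ ≤ 2*(N:ℝ)*l := by
    have h := Nat.lt_floor_add_one (γ/l)
    rw [div_lt_iff₀ hl0] at h
    have hN1 : (1:ℝ) ≤ (N:ℝ) := by exact_mod_cast Nat.one_le_of_lt hN2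
    nlinarith
  clear_value l N
  have hx0 : ∀ v, 0 ≤ x v := fun v => (hx.1 v).1
  have hx1 : ∀ v, x v ≤ 1 := fun v => (hx.1 v).2
  -- min vertex cover S
  obtain ⟨S, hSvc, hScard⟩ : ∃ S : Set V, IsVC G S ∧ S.ncard = tau G := by
    have h1 : tau G ∈ {m | ∃ S : Set V, IsVC G S ∧ S.ncard = m} :=
      Nat.sInf_mem ⟨(Set.univ : Set V).ncard, Set.univ, fun u v _ => Or.inl trivial, rfl⟩
    exact h1
  -- counting helper
  have hcnt : ∀ A : Set V, A.ncard = (univ.filter (fun v => v ∈ A)).card := by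
    intro A; rw [← Set.ncard_coe_finset]; congr 1; ext v; simp
  -- fracTau facts
  have hbdd : BddBelow {s : ℝ | ∃ y : V → ℝ, IsFracVC G y ∧ (∑ v, y v) = s} :=
    ⟨0, by rintro s ⟨y, hy, rfl⟩; exact Finset.sum_nonneg fun v _ => (hy.1 v).1⟩
  have hfle : ∀ y : V → ℝ, IsFracVC G y → fracTau G ≤ ∑ v, y v :=
    fun y hy => csInf_le hbdd ⟨y, hy, rfl⟩
  have hσ0 : 0 ≤ fracTau G :=
    le_csInf ⟨∑ v, x v, x, hx, rfl⟩
      (by rintro s ⟨y, hy, rfl⟩; exact Finset.sum_nonneg fun v _ => (hy.1 v).1)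
  have hστ : fracTau G ≤ (tau G : ℝ) := by
    have hy : IsFracVC G (fun v => if v ∈ S then (1:ℝ) else 0) := by
      constructor
      · intro v; dsimp only; split_ifs <;> norm_num
      · intro u v huv
        rcases hSvc huv with h | h <;> simp only [h, if_true] <;> split_ifs <;> norm_num
    have hsum : (∑ v, if v ∈ S then (1:ℝ) else 0) = (tau G : ℝ) := by
      rw [Finset.sum_boole, ← hScard, hcnt S]
    calc fracTau G ≤ _ := hfle _ hy
      _ = _ := hsum
  have hτ0 : (0:ℝ) ≤ (tau G : ℝ) := Nat.cast_nonneg _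
  have hsx : ∑ v, x v ≤ (1+δ) * (tau G : ℝ) := by
    calc ∑ v, x v ≤ (1+δ) * fracTau G := hxsize
      _ ≤ (1+δ) * (tau G : ℝ) := by nlinarith
  -- bands
  set Pb : ℕ → V → Prop := fun i v => 1/2 - ((i:ℝ)+1)*l ≤ x v ∧ x v < 1/2 - (i:ℝ)*l with hPb
  set Qb : ℕ → V → Prop := fun j v => 1/2 + (j:ℝ)*l < x v ∧ x v ≤ 1/2 + ((j:ℝ)+1)*l with hQb
  set a : ℕ → ℕ := fun i => (univ.filter (fun v => Pb i v)).card with ha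
  set b : ℕ → ℕ := fun j => (univ.filter (fun v => Qb j v)).card with hb
  have hbandsum : ∑ i ∈ range N, ((a i:ℝ) + (b (i+1):ℝ)) ≤ (8/3) * ∑ v, x v := by
    have h1 : ∀ i, ((a i:ℝ) + (b (i+1):ℝ))
        = ∑ v, ((if Pb i v then (1:ℝ) else 0) + (if Qb (i+1) v then (1:ℝ) else 0)) := by
      intro i
      rw [Finset.sum_add_distrib, Finset.sum_boole, Finset.sum_boole]
    have h2 : ∑ i ∈ range N, ((a i:ℝ) + (b (i+1):ℝ))
        = ∑ v, ∑ i ∈ range N, ((if Pb i v then (1:ℝ) else 0) + (if Qb (i+1) v then (1:ℝ) else 0)) := by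
      rw [← Finset.sum_comm]
      exact Finset.sum_congr rfl fun i _ => h1 i
    rw [h2, Finset.mul_sum]
    refine Finset.sum_le_sum fun v _ => ?_
    by_cases hv : ∃ i, i ∈ range N ∧ (Pb i v ∨ Qb (i+1) v)
    · obtain ⟨i, hiN, hi⟩ := hv
      have hxv : 3/8 ≤ x v := by
        have hiN' : (i:ℝ) + 1 ≤ (N:ℝ) := by exact_mod_cast Nat.succ_le_of_lt (mem_range.1 hiN)
        have h3 : ((i:ℝ)+1)*l ≤ γ := le_trans (mul_le_mul_of_nonneg_right hiN' hl0.le) hNl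
        rcases hi with h | h
        · have := h.1; linarith
        · have h4 : (0:ℝ) ≤ ((i:ℝ)+1)*l :=
            mul_nonneg (by positivity) hl0.le
          have := h.1; push_cast at this; linarith
      have hone : ∑ i ∈ range N, ((if Pb i v then (1:ℝ) else 0) + (if Qb (i+1) v then (1:ℝ) else 0)) ≤ 1 := by
        rw [Finset.sum_add_distrib, Finset.sum_boole, Finset.sum_boole]
        have hP1 : ((range N).filter (fun i => Pb i v)).card ≤ 1 := by
          refine Finset.card_le_one.2 fun i hi j hj => ?_
          simp only [mem_filter, hPb] at hi hj
          have h1 := hi.2.1; have h2 := hi.2.2; have h3 := hj.2.1; have h4 := hj.2.2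
          have hij : i ≤ j := by
            have : (i:ℝ) < (j:ℝ) + 1 := by nlinarith
            exact_mod_cast Nat.lt_succ_iff.1 (by exact_mod_cast this)
          have hji : j ≤ i := by
            have : (j:ℝ) < (i:ℝ) + 1 := by nlinarith
            exact_mod_cast Nat.lt_succ_iff.1 (by exact_mod_cast this)
          omega
        have hQ1 : ((range N).filter (fun i => Qb (i+1) v)).card ≤ 1 := by
          refine Finset.card_le_one.2 fun i hi j hj => ?_
          simp only [mem_filter, hQb] at hi hj
          have h1 := hi.2.1; have h2 := hi.2.2; have h3 := hj.2.1; have h4 := hj.2.2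
          push_cast at h1 h2 h3 h4
          have hij : i ≤ j := by
            have : (i:ℝ) < (j:ℝ) + 1 := by nlinarith
            exact_mod_cast Nat.lt_succ_iff.1 (by exact_mod_cast this)
          have hji : j ≤ i := by
            have : (j:ℝ) < (i:ℝ) + 1 := by nlinarith
            exact_mod_cast Nat.lt_succ_iff.1 (by exact_mod_cast this)
          omega
        have hPQ : ((range N).filter (fun i => Pb i v)).card = 0 ∨
            ((range N).filter (fun i => Qb (i+1) v)).card = 0 := by
          by_contra hcon
          push_neg at hcon
          obtain ⟨i, hi⟩ := Finset.card_pos.1 (Nat.pos_of_ne_zero hcon.1)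
          obtain ⟨j, hj⟩ := Finset.card_pos.1 (Nat.pos_of_ne_zero hcon.2)
          simp only [mem_filter, hPb, hQb] at hi hj
          have h1 := hi.2.2; have h2 := hj.2.1
          have hi0 : (0:ℝ) ≤ (i:ℝ)*l := mul_nonneg (by positivity) hl0.le
          have hj0 : (0:ℝ) ≤ ((j:ℝ)+1)*l := mul_nonneg (by positivity) hl0.le
          push_cast at h1 h2
          linarith
        rcases hPQ with h | h
        · rw [h]; simp only [Nat.cast_zero, zero_add]; exact_mod_cast hQ1
        · rw [h]; simp only [Nat.cast_zero, add_zero]; exact_mod_cast hP1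
      linarith
    · push_neg at hv
      have hz : ∑ i ∈ range N, ((if Pb i v then (1:ℝ) else 0) + (if Qb (i+1) v then (1:ℝ) else 0)) = 0 := by
        refine Finset.sum_eq_zero fun i hi => ?_
        have := hv i hi
        simp [this.1, this.2]
      rw [hz]
      have := hx0 v; linarith
  -- pigeonhole
  obtain ⟨i₀, hi₀, hmin⟩ := Finset.exists_min_image (range N) (fun i => a i + b (i+1))
    ⟨0, mem_range.2 (by omega)⟩
  have hfi : γ * ((a i₀:ℝ) + (b (i₀+1):ℝ)) ≤ (11/2) * l * (tau G : ℝ) := by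
    have hNfi : (N:ℝ) * ((a i₀:ℝ) + (b (i₀+1):ℝ)) ≤ ∑ i ∈ range N, ((a i:ℝ) + (b (i+1):ℝ)) := by
      calc (N:ℝ) * ((a i₀:ℝ) + (b (i₀+1):ℝ))
          = ∑ _i ∈ range N, ((a i₀:ℝ) + (b (i₀+1):ℝ)) := by
            rw [Finset.sum_const, card_range, nsmul_eq_mul]
        _ ≤ _ := by
            refine Finset.sum_le_sum fun i hi => ?_
            have := hmin i hi
            exact_mod_cast this
    have hfi0 : (0:ℝ) ≤ (a i₀:ℝ) + (b (i₀+1):ℝ) := by positivity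
    have h1 : (N:ℝ) * ((a i₀:ℝ) + (b (i₀+1):ℝ)) ≤ (8/3) * ((1+δ) * (tau G:ℝ)) := by
      calc (N:ℝ) * ((a i₀:ℝ) + (b (i₀+1):ℝ)) ≤ (8/3) * ∑ v, x v := le_trans hNfi hbandsum
        _ ≤ (8/3) * ((1+δ) * (tau G:ℝ)) := by linarith [hsx]
    have h2 : γ * ((a i₀:ℝ) + (b (i₀+1):ℝ)) ≤ 2*l*((N:ℝ) * ((a i₀:ℝ) + (b (i₀+1):ℝ))) := by
      nlinarith
    have h3 : 2*l*((N:ℝ) * ((a i₀:ℝ) + (b (i₀+1):ℝ))) ≤ 2*l*((8/3) * ((1+δ) * (tau G:ℝ))) := by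
      apply mul_le_mul_of_nonneg_left h1 (by linarith)
    have h4 : 2*l*((8/3) * ((1+δ) * (tau G:ℝ))) ≤ (11/2) * l * (tau G:ℝ) := by
      nlinarith [mul_nonneg (by linarith : (0:ℝ) ≤ 1/32 - δ) (mul_nonneg hl0.le hτ0)]
    linarith
  set al : ℝ := 1/2 - ((i₀:ℝ)+1) * l with hal
  clear_value al
  have hi₀N : (i₀:ℝ) + 1 ≤ (N:ℝ) := by
    have := mem_range.1 hi₀
    exact_mod_cast Nat.succ_le_of_lt this
  have hi₀l : ((i₀:ℝ)+1)*l ≤ γ :=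
    le_trans (mul_le_mul_of_nonneg_right hi₀N hl0.le) hNl
  have hαlo : 1/2 - γ - l ≤ al := by simp only [hal]; linarith
  have hαhi : al ≤ 1/2 - l := by
    have : (0:ℝ) ≤ (i₀:ℝ) := Nat.cast_nonneg _
    simp only [hal]; nlinarith
  have hα3 : 3/8 ≤ al := by simp only [hal]; linarith
  refine ⟨al, hαlo, hαhi, ?_⟩
  intro L H K hLdef hHdef hKdef
  have hLmem : ∀ v, v ∈ L ↔ x v < al := by intro v; rw [hLdef]; rfl
  have hHmem : ∀ v, v ∈ H ↔ 1 - al < x v := by intro v; rw [hHdef]; rfl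
  have hKmem : ∀ v, v ∈ K ↔ al ≤ x v ∧ x v ≤ 1 - al := by
    intro v
    rw [hKdef, Set.mem_diff, Set.mem_union, hLmem, hHmem]
    simp only [Set.mem_univ, true_and, not_or, not_lt]
  constructor
  · -- part (a)
    have hKa : al * ((univ.filter (fun v => v ∈ K)).card : ℝ) ≤ ∑ v, x v := by
      calc al * ((univ.filter (fun v => v ∈ K)).card : ℝ)
          = ∑ _v ∈ univ.filter (fun v => v ∈ K), al := by
            rw [Finset.sum_const, nsmul_eq_mul, mul_comm]
        _ ≤ ∑ v ∈ univ.filter (fun v => v ∈ K), x v := by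
            refine Finset.sum_le_sum fun v hv => ?_
            exact ((hKmem v).1 (mem_filter.1 hv).2).1
        _ ≤ ∑ v, x v :=
            Finset.sum_le_sum_of_subset_of_nonneg (subset_univ _) (fun v _ _ => hx0 v)
    rw [hcnt K]
    have hKn0 : (0:ℝ) ≤ ((univ.filter (fun v => v ∈ K)).card : ℝ) := Nat.cast_nonneg _
    have hα32 : 1/2 - (3/2)*γ ≤ al := by linarith
    have h5 : (1/2 - (3/2)*γ) * ((univ.filter (fun v => v ∈ K)).card : ℝ) ≤ (1+δ) * (tau G:ℝ) := by
      exact le_trans (le_trans (mul_le_mul_of_nonneg_right hα32 hKn0) hKa) hsx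
    have h6 : (0:ℝ) < 1/2 - (3/2)*γ := by linarith
    have h7 : (1+δ) ≤ (2+35*γ)*(1/2-(3/2)*γ) := by
      nlinarith [mul_nonneg (by linarith : (0:ℝ) ≤ 1/8 - γ) hγ0.le]
    have h8 : (1+δ)*(tau G:ℝ) ≤ ((2+35*γ)*(1/2-(3/2)*γ))*(tau G:ℝ) :=
      mul_le_mul_of_nonneg_right h7 hτ0
    exact le_of_mul_le_mul_left (by linarith [h5, h8]) h6
  · -- part (b)
    intro SK hSKvc hSKle
    have hcover : IsVC G (SK ∪ H) := by
      intro u v huv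
      by_cases hu : u ∈ H
      · exact Or.inl (Set.mem_union_right _ hu)
      by_cases hv : v ∈ H
      · exact Or.inr (Set.mem_union_right _ hv)
      have hsum := hx.2 huv
      have hu1 : x u ≤ 1 - al := not_lt.1 (fun h => hu ((hHmem u).2 h))
      have hv1 : x v ≤ 1 - al := not_lt.1 (fun h => hv ((hHmem v).2 h))
      have hu2 : al ≤ x u := by
        by_contra h
        push_neg at h
        exact hv ((hHmem v).2 (by linarith))
      have hv2 : al ≤ x v := by
        by_contra h
        push_neg at h
        exact hu ((hHmem u).2 (by linarith))
      rcases hSKvc.2 huv ((hKmem u).2 ⟨hu2, hu1⟩) ((hKmem v).2 ⟨hv2, hv1⟩) with h | h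
      · exact Or.inl (Set.mem_union_left _ h)
      · exact Or.inr (Set.mem_union_left _ h)
    refine ⟨hcover, ?_⟩
    set p1 : V → Prop := fun v => v ∈ S ∧ x v < al with hp1
    set p2 : V → Prop := fun v => v ∈ S ∧ al ≤ x v ∧ x v ≤ 1 - al with hp2
    set p3 : V → Prop := fun v => v ∈ S ∧ 1 - al < x v with hp3
    set c1 := (univ.filter p1).card with hc1
    set c2 := (univ.filter p2).card with hc2
    set c3 := (univ.filter p3).card with hc3
    clear_value c1 c2 c3
    have hsplit : c1 + c2 + c3 ≤ tau G := by
      have hd12 : Disjoint (univ.filter p1) (univ.filter p2) := by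
        rw [Finset.disjoint_left]
        intro v h1 h2
        simp only [mem_filter, hp1, hp2] at h1 h2
        have ha1 := h1.2.2; have ha2 := h2.2.2.1
        linarith only [ha1, ha2]
      have hd3 : Disjoint (univ.filter p1 ∪ univ.filter p2) (univ.filter p3) := by
        rw [Finset.disjoint_left]
        intro v h1 h2
        simp only [Finset.mem_union, mem_filter, hp1, hp2, hp3] at h1 h2
        have h3 := h2.2.2
        rcases h1 with h | h
        · have h4 := h.2.2; linarith only [h3, h4, hαhi, hl0]
        · have h4 := h.2.2.2; linarith only [h3, h4]
      have hsub : (univ.filter p1 ∪ univ.filter p2) ∪ univ.filter p3 ⊆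
          univ.filter (fun v => v ∈ S) := by
        intro v hv
        simp only [Finset.mem_union, mem_filter, hp1, hp2, hp3] at hv ⊢
        refine ⟨mem_univ v, ?_⟩
        tauto
      rw [hc1, hc2, hc3]
      calc (univ.filter p1).card + (univ.filter p2).card + (univ.filter p3).card
            = ((univ.filter p1 ∪ univ.filter p2) ∪ univ.filter p3).card := by
            rw [Finset.card_union_of_disjoint hd3, Finset.card_union_of_disjoint hd12]
        _ ≤ (univ.filter (fun v => v ∈ S)).card := Finset.card_le_card hsub
        _ = tau G := by rw [← hcnt S, hScard]
    have htauOn : (tauOn G K : ℝ) ≤ (c2 : ℝ) := by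
      have hvcon : IsVCOn G K (S ∩ K) := by
        constructor
        · exact Set.inter_subset_right
        · intro u v huv hu hv
          rcases hSvc huv with h | h
          · exact Or.inl ⟨h, hu⟩
          · exact Or.inr ⟨h, hv⟩
      have h1 : tauOn G K ≤ (S ∩ K).ncard := Nat.sInf_le ⟨S ∩ K, hvcon, rfl⟩
      have h2 : (S ∩ K).ncard = c2 := by
        rw [hcnt (S ∩ K), hc2]
        congr 1
        ext v
        simp only [mem_filter, Set.mem_inter_iff, hp2, hKmem v]
      exact_mod_cast h2 ▸ h1
    set q1 : V → Prop := fun v => v ∈ S ∧ x v < al + l with hq1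
    set q2 : V → Prop := fun v => v ∉ S ∧ 1 - al + l ≤ x v with hq2
    set z : V → ℝ := fun v => if q1 v then min (x v + l) 1 else if q2 v then x v - l else x v
      with hz
    set cA := (univ.filter q1).card with hcA
    set cB := (univ.filter q2).card with hcB
    clear_value cA cB
    have hzmid : ∀ v, ¬ q1 v → ¬ q2 v → z v = x v := by
      intro v h1 h2; simp only [hz, if_neg h1, if_neg h2]
    have hzq1 : ∀ v, q1 v → z v = min (x v + l) 1 := by
      intro v h1; simp only [hz, if_pos h1]
    have hzq2 : ∀ v, ¬ q1 v → q2 v → z v = x v - l := by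
      intro v h1 h2; simp only [hz, if_neg h1, if_pos h2]
    have hzge2 : ∀ v, ¬ q2 v → x v ≤ z v := by
      intro v h2
      by_cases h1 : q1 v
      · rw [hzq1 v h1]; exact le_min (by linarith [hl0]) (hx1 v)
      · rw [hzmid v h1 h2]
    have hzVC : IsFracVC G z := by
      constructor
      · intro v
        by_cases h1 : q1 v
        · rw [hzq1 v h1]
          constructor
          · exact le_min (by linarith [hx0 v, hl0.le]) (by norm_num)
          · exact min_le_right _ _
        · by_cases h2 : q2 v
          · rw [hzq2 v h1 h2]
            have h3 := h2.2
            constructor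
            · linarith only [h3, hαhi, hl0]
            · linarith only [hx1 v, hl0]
          · rw [hzmid v h1 h2]; exact hx.1 v
      · have key : ∀ u v : V, G.Adj u v → u ∈ S → 1 ≤ z u + z v := by
          intro u v huv huS
          have hsum := hx.2 huv
          have hnq2u : ¬ q2 u := fun h => h.1 huS
          by_cases h2v : q2 v
          · have hxv := h2v.2
            by_cases h1u : q1 u
            · rw [hzq1 u h1u, hzq2 v (fun h => h2v.1 h.1) h2v]
              rcases le_or_gt (x u + l) 1 with h | h
              · rw [min_eq_left h]; linarith only [hsum]
              · rw [min_eq_right h.le]; linarith only [hxv, hαhi, hl0]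
            · rw [hzmid u h1u hnq2u, hzq2 v (fun h => h2v.1 h.1) h2v]
              have hxu : al + l ≤ x u := by
                by_contra h
                push_neg at h
                exact h1u ⟨huS, h⟩
              linarith only [hxu, hxv, hl0]
          · have h1 : x u ≤ z u := hzge2 u hnq2u
            have h2 : x v ≤ z v := hzge2 v h2v
            linarith only [h1, h2, hsum]
        intro u v huv
        rcases hSvc huv with h | h
        · exact key u v huv h
        · rw [add_comm]; exact key v u huv.symm h
    have hz_le : ∑ v, z v ≤ ∑ v, x v + l * cA - l * cB := by
      have hpt : ∀ v, z v ≤ x v + (if q1 v then l else 0) - (if q2 v then l else 0) := by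
        intro v
        by_cases h1 : q1 v
        · have hn2 : ¬ q2 v := fun h => h.1 h1.1
          rw [hzq1 v h1, if_pos h1, if_neg hn2]
          have := min_le_left (x v + l) 1
          linarith
        · by_cases h2 : q2 v
          · rw [hzq2 v h1 h2, if_neg h1, if_pos h2]; linarith
          · rw [hzmid v h1 h2, if_neg h1, if_neg h2]; linarith
      have e1 : (∑ v, if q1 v then l else (0:ℝ)) = l * cA := by
        rw [hcA, Finset.sum_ite, Finset.sum_const, Finset.sum_const_zero, add_zero,
          nsmul_eq_mul, mul_comm]
      have e2 : (∑ v, if q2 v then l else (0:ℝ)) = l * cB := by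
        rw [hcB, Finset.sum_ite, Finset.sum_const, Finset.sum_const_zero, add_zero,
          nsmul_eq_mul, mul_comm]
      calc ∑ v, z v ≤ ∑ v, (x v + (if q1 v then l else 0) - (if q2 v then l else 0)) :=
            Finset.sum_le_sum fun v _ => hpt v
        _ = ∑ v, x v + l * cA - l * cB := by
            rw [Finset.sum_sub_distrib, Finset.sum_add_distrib, e1, e2]
    have hBA : l * (cB:ℝ) ≤ l * (cA:ℝ) + δ * (tau G:ℝ) := by
      have h1 : fracTau G ≤ ∑ v, z v := hfle z hzVC
      have h2 : δ * fracTau G ≤ δ * (tau G:ℝ) := mul_le_mul_of_nonneg_left hστ hδ0.le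
      linarith [hxsize, hz_le]
    have hAsub : (cA:ℝ) ≤ (c1:ℝ) + (a i₀:ℝ) := by
      have h : univ.filter q1 ⊆ univ.filter p1 ∪ univ.filter (fun v => Pb i₀ v) := by
        intro v hv
        simp only [Finset.mem_union, mem_filter, hq1, hp1, hPb] at hv ⊢
        rcases lt_or_ge (x v) al with h | h
        · exact Or.inl ⟨mem_univ v, hv.2.1, h⟩
        · refine Or.inr ⟨mem_univ v, ?_, ?_⟩
          · simp only [hal] at h; linarith
          · have h4 := hv.2.2; simp only [hal] at h4 ⊢; linarith
      have h5 := le_trans (Finset.card_le_card h) (Finset.card_union_le _ _)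
      rw [hcA, hc1]
      exact_mod_cast h5
    have hHcard : (H.ncard : ℝ) ≤ (c3:ℝ) + (b (i₀+1):ℝ) + (cB:ℝ) := by
      have h : univ.filter (fun v => v ∈ H) ⊆
          (univ.filter p3 ∪ univ.filter (fun v => Qb (i₀+1) v)) ∪ univ.filter q2 := by
        intro v hv
        have hvH : 1 - al < x v := (hHmem v).1 (mem_filter.1 hv).2
        simp only [Finset.mem_union, mem_filter, hp3, hQb, hq2]
        by_cases hvS : v ∈ S
        · exact Or.inl (Or.inl ⟨mem_univ v, hvS, hvH⟩)
        · by_cases hless : x v < 1 - al + l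
          · refine Or.inl (Or.inr ⟨mem_univ v, ?_, ?_⟩)
            · push_cast
              simp only [hal] at hvH; linarith
            · push_cast
              simp only [hal] at hless; linarith
          · exact Or.inr ⟨mem_univ v, hvS, by linarith⟩
      rw [hcnt H]
      have h6 := le_trans (Finset.card_le_card h)
        (le_trans (Finset.card_union_le _ _)
          (Nat.add_le_add_right (Finset.card_union_le _ _) _))
      rw [hc3, hcB]
      exact_mod_cast h6
    have hUle : ((SK ∪ H).ncard : ℝ) ≤ (SK.ncard : ℝ) + (H.ncard : ℝ) := by
      exact_mod_cast Set.ncard_union_le SK H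
    have hSKc : (SK.ncard : ℝ) ≤ c * (c2:ℝ) :=
      le_trans hSKle (mul_le_mul_of_nonneg_left htauOn (by linarith))
    have hsplitR : (c1:ℝ) + (c2:ℝ) + (c3:ℝ) ≤ (tau G:ℝ) := by exact_mod_cast hsplit
    have hBl : (cB:ℝ) ≤ (cA:ℝ) + (l/γ) * (tau G:ℝ) := by
      have hδτ : δ * (tau G:ℝ) = l * ((l/γ) * (tau G:ℝ)) := by
        rw [show l * ((l/γ) * (tau G:ℝ)) = (l*l) * (tau G:ℝ) / γ by ring, hll]
        field_simp
      have h3 : l * (cB:ℝ) ≤ l * ((cA:ℝ) + (l/γ) * (tau G:ℝ)) := by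
        rw [mul_add]; linarith [hBA, hδτ]
      exact (mul_le_mul_iff_right₀ hl0).1 h3
    have hfiR : (a i₀:ℝ) + (b (i₀+1):ℝ) ≤ (11/2) * ((l/γ) * (tau G:ℝ)) := by
      have h1 : γ * ((a i₀:ℝ) + (b (i₀+1):ℝ)) ≤ γ * ((11/2) * ((l/γ) * (tau G:ℝ))) := by
        have h2 : γ * ((11/2) * ((l/γ) * (tau G:ℝ))) = (11/2) * l * (tau G:ℝ) := by
          field_simp
        rw [h2]; exact hfi
      exact le_of_mul_le_mul_left h1 hγ0
    have hsqrt : Real.sqrt (δ/γ) = l / γ := by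
      have h1 : δ/γ = (l/γ)^2 := by
        rw [div_pow, hl2, pow_two, mul_div_mul_left _ _ (ne_of_gt hγ0)]
      rw [h1, Real.sqrt_sq (div_nonneg hl0.le hγ0.le)]
    rw [hsqrt]
    have ht0 : (0:ℝ) ≤ (l/γ) * (tau G:ℝ) :=
      mul_nonneg (div_nonneg hl0.le hγ0.le) hτ0
    have hc10 : (0:ℝ) ≤ (c1:ℝ) := Nat.cast_nonneg _
    have hc30 : (0:ℝ) ≤ (c3:ℝ) := Nat.cast_nonneg _
    have habs : c * (c2:ℝ) + (c1:ℝ) + (c3:ℝ) ≤ c * (tau G:ℝ) := by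
      linarith only [mul_le_mul_of_nonneg_left hsplitR (by linarith : (0:ℝ) ≤ c),
        mul_nonneg (by linarith : (0:ℝ) ≤ c - 1) hc10,
        mul_nonneg (by linarith : (0:ℝ) ≤ c - 1) hc30]
    linarith only [hUle, hSKc, hHcard, hBl, hAsub, hfiR, habs, ht0,
      mul_nonneg (by linarith : (0:ℝ) ≤ c - 1) ht0]
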